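/- Fix n and k ≤ n, and consider the set of words of length n with exactly k `true` entries, partially ordered by reachability (w₀ ≤ w₁ iff w₁ is reachable from w₀). This poset is a lattice: any two elements have a least upper bound and a greatest lower bound. Moreover it is bounded: the word List.replicate k true ++ List.replicate (n−k) false is the least element and List.replicate (n−k) false ++ List.replicate k true is the greatest element (hence, being finite and bounded, the poset is a complete lattice). -/

import Mathlib

/-- A single pawn move: a pawn (`true`) advances one square rightward into an
empty square (`false`). -/
def PawnMove (w₀ w₁ : List Bool) : Prop :=
  ∃ u v : List Bool, w₀ = u ++ [true, false] ++ v ∧ w₁ = u ++ [false, true] ++ v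

/-- Reachability: the reflexive-transitive closure of the single-move relation. -/
def Reach : List Bool → List Bool → Prop :=
  Relation.ReflTransGen PawnMove

/-- The `ZMod 2` pairing `⟨w₀|w₁⟩`: `1` if `w₁` is reachable from `w₀`, else `0`. -/
noncomputable def pairing (w₀ w₁ : List Bool) : ZMod 2 :=
  open Classical in if Reach w₀ w₁ then 1 else 0

/-- prefix count of pawns -/
def pc (w : List Bool) (j : ℕ) : ℕ := (w.take j).count true

lemma pc_nil (j : ℕ) : pc [] j = 0 := by simp [pc]

lemma pc_zero (w : List Bool) : pc w 0 = 0 := by simp [pc]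

lemma pc_cons (x : Bool) (w : List Bool) (j : ℕ) :
    pc (x :: w) (j+1) = (if x then 1 else 0) + pc w j := by
  cases x <;> simp [pc, List.count_cons] <;> omega

lemma pc_append (u l : List Bool) (j : ℕ) :
    pc (u ++ l) j = pc u j + pc l (j - u.length) := by
  simp [pc, List.take_append, List.count_append]

lemma pc_le (w : List Bool) (j : ℕ) : pc w j ≤ j := by
  calc pc w j ≤ (w.take j).length := List.count_le_length
  _ ≤ j := by simp [List.length_take]

lemma pc_le_count (w : List Bool) (j : ℕ) : pc w j ≤ w.count true :=
  (List.take_sublist j w).count_le _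

lemma pc_ge_length (w : List Bool) (j : ℕ) (h : w.length ≤ j) :
    pc w j = w.count true := by
  simp [pc, List.take_of_length_le h]

lemma pc_replicate_true (s j : ℕ) : pc (List.replicate s true) j = min j s := by
  simp [pc, List.take_replicate, List.count_replicate]

lemma pc_replicate_false (s j : ℕ) : pc (List.replicate s false) j = 0 := by
  simp [pc, List.take_replicate, List.count_replicate]

lemma pc_move_le (v : List Bool) (m : ℕ) :
    pc (false :: true :: v) m ≤ pc (true :: false :: v) m := by
  match m with
  | 0 => simp [pc_zero]
  | 1 => simp [pc]
  | (m+2) => simp [pc_cons]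

lemma pawnMove_facts {a b : List Bool} (h : PawnMove a b) :
    a.length = b.length ∧ a.count true = b.count true ∧ ∀ j, pc b j ≤ pc a j := by
  obtain ⟨u, v, h1, h2⟩ := h
  subst h1; subst h2
  refine ⟨by simp, by simp [List.count_append], fun j => ?_⟩
  have e1 : u ++ [true, false] ++ v = u ++ (true :: false :: v) := by simp
  have e2 : u ++ [false, true] ++ v = u ++ (false :: true :: v) := by simp
  rw [e1, e2, pc_append, pc_append]
  exact Nat.add_le_add_left (pc_move_le v _) _

lemma reach_facts {a b : List Bool} (h : Reach a b) :
    a.length = b.length ∧ a.count true = b.count true ∧ ∀ j, pc b j ≤ pc a j := by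
  induction h with
  | refl => exact ⟨rfl, rfl, fun _ => le_rfl⟩
  | tail _ h2 ih =>
    obtain ⟨l1, c1, d1⟩ := ih
    obtain ⟨l2, c2, d2⟩ := pawnMove_facts h2
    exact ⟨l1.trans l2, c1.trans c2, fun j => (d2 j).trans (d1 j)⟩

lemma Reach.cons (x : Bool) {a b : List Bool} (h : Reach a b) : Reach (x :: a) (x :: b) :=
  Relation.ReflTransGen.lift (x :: ·)
    (fun _ _ (⟨u, v, h1, h2⟩ : PawnMove _ _) => ⟨x :: u, v, by simp [h1], by simp [h2]⟩) _ _ h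

lemma reach_shift (m : ℕ) (v : List Bool) :
    Reach (List.replicate m true ++ false :: v) (false :: (List.replicate m true ++ v)) := by
  induction m with
  | zero => exact Relation.ReflTransGen.refl
  | succ m ih =>
    have step : PawnMove (true :: false :: (List.replicate m true ++ v))
        (false :: true :: (List.replicate m true ++ v)) := ⟨[], _, rfl, rfl⟩
    have h1 : Reach (List.replicate (m+1) true ++ false :: v)
        (true :: false :: (List.replicate m true ++ v)) := by
      rw [List.replicate_succ, List.cons_append]
      exact ih.cons true
    have := h1.trans (Relation.ReflTransGen.single step)
    simpa [Reach, List.replicate_succ] using this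

lemma exists_split (w : List Bool) (h : false ∈ w) :
    ∃ m v, w = List.replicate m true ++ false :: v := by
  induction w with
  | nil => simp at h
  | cons x w ih =>
    cases x with
    | false => exact ⟨0, w, rfl⟩
    | true =>
      have : false ∈ w := by simpa using h
      obtain ⟨m, v, hv⟩ := ih this
      exact ⟨m+1, v, by simp [List.replicate_succ, hv]⟩

lemma reach_of_pc : ∀ (b a : List Bool), a.length = b.length →
    a.count true = b.count true → (∀ j, pc b j ≤ pc a j) → Reach a b := by
  intro b
  induction b with
  | nil =>
    intro a hl _ _
    have : a = [] := by simpa using hl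
    subst this; exact Relation.ReflTransGen.refl
  | cons y b' ih =>
    intro a hl hc hd
    match a with
    | [] => simp at hl
    | x :: a' =>
      have hl' : a'.length = b'.length := by simpa using hl
      cases x <;> cases y
      · -- false, false
        have hc' : a'.count true = b'.count true := by simpa [List.count_cons] using hc
        have hd' : ∀ j, pc b' j ≤ pc a' j := fun j => by
          have := hd (j+1); simpa [pc_cons] using this
        exact (ih a' hl' hc' hd').cons false
      · -- false :: a', true :: b' : contradiction
        have := hd 1
        simp [pc] at this
      · -- true :: a', false :: b' : main case
        have hcnt : a'.count true + 1 = b'.count true := by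
          have := hc; simp [List.count_cons] at this; omega
        have hmem : false ∈ a' := by
          by_contra hmem
          have hall : ∀ z ∈ a', true = z := by
            intro z hz; cases z
            · exact absurd hz hmem
            · rfl
          have := List.count_eq_length.mpr hall
          have hle : b'.count true ≤ b'.length := List.count_le_length
          omega
        obtain ⟨m, v, rfl⟩ := exists_split a' hmem
        have hshift : Reach (true :: (List.replicate m true ++ false :: v))
            (false :: (List.replicate (m+1) true ++ v)) := by
          have := reach_shift (m+1) v
          simpa [List.replicate_succ] using this
        have htail : Reach (List.replicate (m+1) true ++ v) b' := by
          apply ih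
          · simp at hl' ⊢; omega
          · simp [List.count_append, List.count_replicate, List.count_cons] at hcnt ⊢
            omega
          · intro j
            rcases le_or_gt j m with hj | hj
            · have h1 : pc (List.replicate (m+1) true ++ v) j = j := by
                rw [pc_append, pc_replicate_true]
                simp only [List.length_replicate]
                have : j - (m+1) = 0 := by omega
                rw [this, pc_zero]
                omega
              rw [h1]; exact pc_le b' j
            · have h1 : pc (List.replicate (m+1) true ++ v) j = (m+1) + pc v (j - (m+1)) := by
                rw [pc_append, pc_replicate_true]
                simp only [List.length_replicate]
                congr 1; omega
              have h2 : pc (List.replicate m true ++ false :: v) j = m + pc v (j - (m+1)) := by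
                rw [pc_append, pc_replicate_true]
                simp only [List.length_replicate]
                have e : j - m = (j - (m+1)) + 1 := by omega
                rw [e, pc_cons]
                simp; omega
              have := hd (j+1)
              rw [pc_cons, pc_cons] at this
              simp only [if_true, if_false] at this
              rw [h1]
              rw [h2] at this
              omega
        exact hshift.trans (htail.cons false)
      · -- true, true
        have hc' : a'.count true = b'.count true := by simpa [List.count_cons] using hc
        have hd' : ∀ j, pc b' j ≤ pc a' j := fun j => by
          have := hd (j+1); rw [pc_cons, pc_cons] at this; omega
        exact (ih a' hl' hc' hd').cons true

lemma reach_iff {a b : List Bool} : Reach a b ↔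
    (a.length = b.length ∧ a.count true = b.count true ∧ ∀ j, pc b j ≤ pc a j) :=
  ⟨reach_facts, fun ⟨h1, h2, h3⟩ => reach_of_pc b a h1 h2 h3⟩

def mkWord (g : ℕ → ℕ) (n : ℕ) : List Bool :=
  (List.range n).map fun j => decide (g j < g (j+1))

lemma length_mkWord (g : ℕ → ℕ) (n : ℕ) : (mkWord g n).length = n := by simp [mkWord]

lemma pc_succ (w : List Bool) (j : ℕ) (h : j < w.length) :
    pc w (j+1) = pc w j + (if w.getD j false then 1 else 0) := by
  have e : w.take (j+1) = w.take j ++ [w.getD j false] := by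
    rw [List.take_succ, List.getElem?_eq_getElem h, List.getD_eq_getElem _ _ h]
    rfl
  rw [pc, e, List.count_append, pc]
  cases hx : w.getD j false <;> simp

lemma getD_mkWord (g : ℕ → ℕ) (n j : ℕ) (h : j < n) :
    (mkWord g n).getD j false = decide (g j < g (j+1)) := by
  rw [List.getD_eq_getElem _ _ (by simpa [length_mkWord] using h)]
  simp [mkWord]

lemma pc_mkWord (g : ℕ → ℕ) (n : ℕ) (h0 : g 0 = 0)
    (hm : ∀ j, g j ≤ g (j+1)) (hs : ∀ j, g (j+1) ≤ g j + 1) :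
    ∀ j, j ≤ n → pc (mkWord g n) j = g j := by
  intro j
  induction j with
  | zero => intro _; simp [pc_zero, h0]
  | succ j ih =>
    intro hj
    have hj' : j ≤ n := by omega
    rw [pc_succ _ _ (by rw [length_mkWord]; omega), ih hj',
      getD_mkWord g n j (by omega)]
    rcases Nat.lt_or_ge (g j) (g (j+1)) with hlt | hge
    · have := hs j
      simp [hlt]; omega
    · have : g (j+1) = g j := le_antisymm hge (hm j)
      simp [this]

lemma pc_mono_step (w : List Bool) (j : ℕ) :
    pc w j ≤ pc w (j+1) ∧ pc w (j+1) ≤ pc w j + 1 := by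
  rcases Nat.lt_or_ge j w.length with h | h
  · rw [pc_succ _ _ h]; split <;> omega
  · rw [pc_ge_length _ _ h, pc_ge_length _ _ (by omega)]; omega

lemma count_add (w : List Bool) : w.count true + w.count false = w.length := by
  induction w with
  | nil => simp
  | cons x w ih => cases x <;> simp [List.count_cons] <;> omega


/-- The set of words of length `n` with exactly `k` pawns, ordered by
reachability, is a lattice, with least element `true^k ++ false^(n-k)` and
greatest element `false^(n-k) ++ true^k`. -/
theorem reach_lattice (n k : ℕ) (hk : k ≤ n) :
    let S : Set (List Bool) := {w | w.length = n ∧ w.count true = k}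
    let bot : List Bool := List.replicate k true ++ List.replicate (n - k) false
    let top : List Bool := List.replicate (n - k) false ++ List.replicate k true
    -- least upper bounds exist
    (∀ a ∈ S, ∀ b ∈ S, ∃ c ∈ S, Reach a c ∧ Reach b c ∧
      ∀ d ∈ S, Reach a d → Reach b d → Reach c d) ∧
    -- greatest lower bounds exist
    (∀ a ∈ S, ∀ b ∈ S, ∃ c ∈ S, Reach c a ∧ Reach c b ∧
      ∀ d ∈ S, Reach d a → Reach d b → Reach d c) ∧
    -- least element
    (bot ∈ S ∧ ∀ w ∈ S, Reach bot w) ∧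
    -- greatest element
    (top ∈ S ∧ ∀ w ∈ S, Reach w top) := by
  intro S bot top
  have hmem : ∀ w : List Bool, w ∈ S ↔ (w.length = n ∧ w.count true = k) := fun w => Iff.rfl
  refine ⟨?_, ?_, ?_, ?_⟩
  · -- least upper bounds (pointwise min of prefix counts)
    intro a ha b hb
    obtain ⟨ha1, ha2⟩ := (hmem a).mp ha
    obtain ⟨hb1, hb2⟩ := (hmem b).mp hb
    set g : ℕ → ℕ := fun j => min (pc a j) (pc b j) with hg
    set c : List Bool := mkWord g n with hcdef
    have hc1 : c.length = n := length_mkWord g n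
    have hpcc : ∀ j, j ≤ n → pc c j = g j := by
      apply pc_mkWord
      · simp [hg, pc_zero]
      · intro j
        have h1 := pc_mono_step a j; have h2 := pc_mono_step b j
        simp only [hg]; omega
      · intro j
        have h1 := pc_mono_step a j; have h2 := pc_mono_step b j
        simp only [hg]; omega
    have hgn : g n = k := by
      simp only [hg, pc_ge_length a n ha1.le, pc_ge_length b n hb1.le, ha2, hb2, min_self]
    have hc2 : c.count true = k := by
      rw [← pc_ge_length c n hc1.le, hpcc n le_rfl, hgn]
    have hpc : ∀ j, pc c j = min (pc a j) (pc b j) := by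
      intro j
      rcases le_or_gt j n with hj | hj
      · exact hpcc j hj
      · rw [pc_ge_length c j (by omega), pc_ge_length a j (by omega),
          pc_ge_length b j (by omega), hc2, ha2, hb2, min_self]
    refine ⟨c, (hmem c).mpr ⟨hc1, hc2⟩, ?_, ?_, ?_⟩
    · exact reach_iff.mpr ⟨ha1.trans hc1.symm, ha2.trans hc2.symm,
        fun j => by rw [hpc j]; exact min_le_left _ _⟩
    · exact reach_iff.mpr ⟨hb1.trans hc1.symm, hb2.trans hc2.symm,
        fun j => by rw [hpc j]; exact min_le_right _ _⟩
    · intro d hd hda hdb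
      obtain ⟨hd1, hd2⟩ := (hmem d).mp hd
      obtain ⟨_, _, hda3⟩ := reach_facts hda
      obtain ⟨_, _, hdb3⟩ := reach_facts hdb
      exact reach_iff.mpr ⟨hc1.trans hd1.symm, hc2.trans hd2.symm,
        fun j => by rw [hpc j]; exact le_min (hda3 j) (hdb3 j)⟩
  · -- greatest lower bounds (pointwise max of prefix counts)
    intro a ha b hb
    obtain ⟨ha1, ha2⟩ := (hmem a).mp ha
    obtain ⟨hb1, hb2⟩ := (hmem b).mp hb
    set g : ℕ → ℕ := fun j => max (pc a j) (pc b j) with hg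
    set c : List Bool := mkWord g n with hcdef
    have hc1 : c.length = n := length_mkWord g n
    have hpcc : ∀ j, j ≤ n → pc c j = g j := by
      apply pc_mkWord
      · simp [hg, pc_zero]
      · intro j
        have h1 := pc_mono_step a j; have h2 := pc_mono_step b j
        simp only [hg]; omega
      · intro j
        have h1 := pc_mono_step a j; have h2 := pc_mono_step b j
        simp only [hg]; omega
    have hgn : g n = k := by
      simp only [hg, pc_ge_length a n ha1.le, pc_ge_length b n hb1.le, ha2, hb2, max_self]
    have hc2 : c.count true = k := by
      rw [← pc_ge_length c n hc1.le, hpcc n le_rfl, hgn]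
    have hpc : ∀ j, pc c j = max (pc a j) (pc b j) := by
      intro j
      rcases le_or_gt j n with hj | hj
      · exact hpcc j hj
      · rw [pc_ge_length c j (by omega), pc_ge_length a j (by omega),
          pc_ge_length b j (by omega), hc2, ha2, hb2, max_self]
    refine ⟨c, (hmem c).mpr ⟨hc1, hc2⟩, ?_, ?_, ?_⟩
    · exact reach_iff.mpr ⟨hc1.trans ha1.symm, hc2.trans ha2.symm,
        fun j => by rw [hpc j]; exact le_max_left _ _⟩
    · exact reach_iff.mpr ⟨hc1.trans hb1.symm, hc2.trans hb2.symm,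
        fun j => by rw [hpc j]; exact le_max_right _ _⟩
    · intro d hd hda hdb
      obtain ⟨hd1, hd2⟩ := (hmem d).mp hd
      obtain ⟨_, _, hda3⟩ := reach_facts hda
      obtain ⟨_, _, hdb3⟩ := reach_facts hdb
      exact reach_iff.mpr ⟨hd1.trans hc1.symm, hd2.trans hc2.symm,
        fun j => by rw [hpc j]; exact max_le (hda3 j) (hdb3 j)⟩
  · -- bottom
    have hb1 : bot.length = n := by simp [bot]; omega
    have hb2 : bot.count true = k := by
      simp [bot, List.count_append, List.count_replicate]
    refine ⟨(hmem bot).mpr ⟨hb1, hb2⟩, ?_⟩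
    intro w hw
    obtain ⟨hw1, hw2⟩ := (hmem w).mp hw
    refine reach_iff.mpr ⟨hb1.trans hw1.symm, hb2.trans hw2.symm, fun j => ?_⟩
    have e : pc bot j = min j k := by
      simp only [bot, pc_append, pc_replicate_true, pc_replicate_false, add_zero]
    rw [e]
    exact le_min (pc_le w j) (by rw [← hw2]; exact pc_le_count w j)
  · -- top
    have ht1 : top.length = n := by simp [top]; omega
    have ht2 : top.count true = k := by
      simp [top, List.count_append, List.count_replicate]
    refine ⟨(hmem top).mpr ⟨ht1, ht2⟩, ?_⟩
    intro w hw
    obtain ⟨hw1, hw2⟩ := (hmem w).mp hw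
    refine reach_iff.mpr ⟨hw1.trans ht1.symm, hw2.trans ht2.symm, fun j => ?_⟩
    have e : pc top j = min (j - (n - k)) k := by
      simp only [top, pc_append, pc_replicate_true, pc_replicate_false,
        List.length_replicate, zero_add]
    rw [e]
    have e1 : pc w j + (w.take j).count false = min j n := by
      have h := count_add (w.take j)
      simpa [pc, List.length_take, hw1] using h
    have e2 : (w.take j).count false ≤ w.count false := (List.take_sublist j w).count_le _
    have e3 : w.count false = n - k := by
      have := count_add w; omega
    omega
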